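/- The space (ω*)^{cf(𝔠)} admits a ⟨cf(𝔠), ω⟩-splitter; explicitly, the sequence of two-element open covers ⟨{π_α^{-1}(E*), π_α^{-1}(O*)}⟩_{α < cf 𝔠}, where E is the set of even numbers and O the set of odd numbers, is a ⟨cf(𝔠), ω⟩-splitter. Consequently Nt((ω*)^{cf 𝔠}) ≤ 𝔠. -/

import Mathlib

open Cardinal Set

universe u

variable {X : Type u}

/-- `B` is a base for the topology of `X`. -/
def IsBase [TopologicalSpace X] (B : Set (Set X)) : Prop :=
  (∀ U ∈ B, IsOpen U) ∧ ∀ W : Set X, IsOpen W → ∀ p ∈ W, ∃ U ∈ B, p ∈ U ∧ U ⊆ W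

/-- `B` is a local base at `p`. -/
def IsLocalBase [TopologicalSpace X] (p : X) (B : Set (Set X)) : Prop :=
  (∀ U ∈ B, IsOpen U ∧ p ∈ U) ∧ ∀ W : Set X, IsOpen W → p ∈ W → ∃ U ∈ B, U ⊆ W

/-- `B` is a local π-base at `p`. -/
def IsLocalPiBase [TopologicalSpace X] (p : X) (B : Set (Set X)) : Prop :=
  (∀ U ∈ B, IsOpen U ∧ U.Nonempty) ∧ ∀ W : Set X, IsOpen W → p ∈ W → ∃ U ∈ B, U ⊆ W

/-- The weight of `X`: the least infinite cardinal `κ` such that `X` has a base of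
cardinality at most `κ`. -/
noncomputable def weight (X : Type u) [TopologicalSpace X] : Cardinal.{u} :=
  sInf {κ | ℵ₀ ≤ κ ∧ ∃ B : Set (Set X), IsBase B ∧ #B ≤ κ}

/-- The character of `p` in `X`. -/
noncomputable def character [TopologicalSpace X] (p : X) : Cardinal.{u} :=
  sInf {κ | ℵ₀ ≤ κ ∧ ∃ B : Set (Set X), IsLocalBase p B ∧ #B ≤ κ}

/-- The π-character of `p` in `X`. -/
noncomputable def piCharacter [TopologicalSpace X] (p : X) : Cardinal.{u} :=
  sInf {κ | ℵ₀ ≤ κ ∧ ∃ B : Set (Set X), IsLocalPiBase p B ∧ #B ≤ κ}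

/-- A family of sets (ordered by `⊆`) is `κ^op`-like if no member is contained in
`κ`-many members. -/
def IsOpLike {Y : Type u} (B : Set (Set Y)) (κ : Cardinal.{u}) : Prop :=
  ∀ U ∈ B, #{V : Set Y // V ∈ B ∧ U ⊆ V} < κ

/-- The Noetherian type of `X`: the least infinite `κ` such that `X` has a
`κ^op`-like base. -/
noncomputable def Nt (X : Type u) [TopologicalSpace X] : Cardinal.{u} :=
  sInf {κ | ℵ₀ ≤ κ ∧ ∃ B : Set (Set X), IsBase B ∧ IsOpLike B κ}

/-- `⟨F i⟩` is a `⟨#ι, κ⟩`-splitter of `X`: a sequence of finite open covers such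
that for every index set `I` of cardinality `κ` and every choice `U i ∈ F i`
(`i ∈ I`), the interior of `⋂_{i ∈ I} U i` is empty. -/
def IsSplitter [TopologicalSpace X] {ι : Type u} (F : ι → Set (Set X))
    (κ : Cardinal.{u}) : Prop :=
  (∀ i, (F i).Finite ∧ (∀ U ∈ F i, IsOpen U) ∧ ⋃₀ F i = Set.univ) ∧
  ∀ (I : Set ι) (U : ι → Set X), #I = κ → (∀ i ∈ I, U i ∈ F i) →
    interior (⋂ i ∈ I, U i) = ∅

/-- `ω*`: the space of nonprincipal ultrafilters on `ω`. -/
def OmegaStar : Type := {p : Ultrafilter ℕ // ∀ x : Set ℕ, x ∈ p → x.Infinite}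

/-- The Stone topology on `ω*`. -/
instance : TopologicalSpace OmegaStar :=
  TopologicalSpace.generateFrom {S | ∃ x : Set ℕ, S = {q : OmegaStar | x ∈ q.1}}

/-- An index type of cardinality `cf 𝔠`. -/
def Idx : Type := (Cardinal.continuum.ord.cof).ord.ToType

/-- The two-element open cover at coordinate `α`, given by the even and odd sets. -/
def evenOddCover (α : Idx) : Set (Set (Idx → OmegaStar)) :=
  { (fun f => f α) ⁻¹' {q : OmegaStar | {n | Even n} ∈ q.1},
    (fun f => f α) ⁻¹' {q : OmegaStar | {n | Odd n} ∈ q.1} }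


/-! ### Auxiliary material -/

open TopologicalSpace Filter

namespace OmegaStarAux

/-- Basic clopen sets of `ω*`. -/
def bS : Set (Set OmegaStar) := {S | ∃ x : Set ℕ, S = {q : OmegaStar | x ∈ q.1}}

lemma isOpen_star (x : Set ℕ) : IsOpen {q : OmegaStar | x ∈ q.1} :=
  TopologicalSpace.isOpen_generateFrom_of_mem ⟨x, rfl⟩

lemma basis_bS : IsTopologicalBasis bS := by
  refine ⟨?_, ?_, rfl⟩
  · rintro t₁ ⟨x, rfl⟩ t₂ ⟨y, rfl⟩ q ⟨hq1, hq2⟩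
    refine ⟨{q : OmegaStar | x ∩ y ∈ q.1}, ⟨x ∩ y, rfl⟩, q.1.toFilter.inter_mem hq1 hq2, ?_⟩
    rintro r hr
    exact ⟨Filter.mem_of_superset hr inter_subset_left,
      Filter.mem_of_superset hr inter_subset_right⟩
  · apply Set.eq_univ_of_univ_subset
    rintro q -
    exact ⟨{q : OmegaStar | Set.univ ∈ q.1}, ⟨Set.univ, rfl⟩, Filter.univ_mem⟩

/-- Every infinite set belongs to some nonprincipal ultrafilter. -/
lemma exists_omegaStar_mem (x : Set ℕ) (hx : x.Infinite) : ∃ q : OmegaStar, x ∈ q.1 := by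
  have hne : (Filter.cofinite ⊓ 𝓟 x).NeBot := hx.cofinite_inf_principal_neBot
  refine ⟨⟨Ultrafilter.of (Filter.cofinite ⊓ 𝓟 x), ?_⟩, ?_⟩
  · intro y hy
    by_contra hfin
    rw [Set.not_infinite] at hfin
    have hyc : yᶜ ∈ Ultrafilter.of (Filter.cofinite ⊓ 𝓟 x) :=
      Ultrafilter.of_le _ (Filter.mem_inf_of_left hfin.compl_mem_cofinite)
    have : (∅ : Set ℕ) ∈ Ultrafilter.of (Filter.cofinite ⊓ 𝓟 x) := by
      have := Filter.inter_mem hy hyc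
      simpa using this
    exact (Ultrafilter.of (Filter.cofinite ⊓ 𝓟 x)).neBot.ne
      (Filter.empty_mem_iff_bot.1 this)
  · exact Ultrafilter.of_le _ (Filter.mem_inf_of_right (Filter.mem_principal_self x))

def Ev : Set ℕ := {n | Even n}
def Od : Set ℕ := {n | Odd n}

lemma Ev_infinite : Ev.Infinite := by
  apply Set.infinite_of_injective_forall_mem (f := fun n : ℕ => 2 * n)
    (hi := fun a b h => by simpa using h)
  intro n; exact ⟨n, by ring⟩

lemma Od_infinite : Od.Infinite := by
  apply Set.infinite_of_injective_forall_mem (f := fun n : ℕ => 2 * n + 1)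
    (hi := fun a b h => by simpa using h)
  intro n; exact ⟨n, by ring⟩

lemma Ev_inter_Od : Ev ∩ Od = ∅ := by
  ext n; simp [Ev, Od, Nat.even_iff, Nat.odd_iff]

lemma not_both (q : OmegaStar) : ¬ (Ev ∈ q.1 ∧ Od ∈ q.1) := by
  rintro ⟨h1, h2⟩
  have : (∅ : Set ℕ) ∈ q.1 := by
    have := Filter.inter_mem h1 h2
    rwa [Ev_inter_Od] at this
  exact q.1.neBot.ne (Filter.empty_mem_iff_bot.1 this)

lemma mem_or (q : OmegaStar) : Ev ∈ q.1 ∨ Od ∈ q.1 := by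
  rcases q.1.mem_or_compl_mem Ev with h | h
  · exact Or.inl h
  · right
    have : Evᶜ = Od := by ext n; simp [Ev, Od, Nat.not_even_iff_odd]
    rwa [this] at h

end OmegaStarAux

namespace OmegaStarAux

lemma mem_evenOddCover {α : Idx} {U : Set (Idx → OmegaStar)} (h : U ∈ evenOddCover α) :
    U = (fun f => f α) ⁻¹' {q : OmegaStar | Ev ∈ q.1} ∨
    U = (fun f => f α) ⁻¹' {q : OmegaStar | Od ∈ q.1} := h

lemma isOpen_of_mem_evenOddCover {α : Idx} {U : Set (Idx → OmegaStar)}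
    (h : U ∈ evenOddCover α) : IsOpen U := by
  rcases mem_evenOddCover h with rfl | rfl <;>
    exact (isOpen_star _).preimage (continuous_apply α)

lemma splitter : IsSplitter evenOddCover ℵ₀ := by
  classical
  constructor
  · intro α
    refine ⟨(Set.finite_singleton _).insert _, fun U hU => isOpen_of_mem_evenOddCover hU, ?_⟩
    apply Set.eq_univ_of_univ_subset
    rintro f -
    rcases mem_or (f α) with h | h
    · exact ⟨_, Or.inl rfl, h⟩
    · exact ⟨_, Or.inr rfl, h⟩
  · intro I U hI hU
    rw [Set.eq_empty_iff_forall_notMem]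
    intro f hf
    have hIinf : I.Infinite := by
      rw [← Set.infinite_coe_iff, Cardinal.infinite_iff, hI]
    obtain ⟨s₀, u, hu, hsub⟩ := (isOpen_pi_iff.1 isOpen_interior) f hf
    obtain ⟨i, hiI, his⟩ : ∃ i, i ∈ I ∧ i ∉ (s₀ : Set Idx) :=
      (hIinf.diff s₀.finite_toSet).nonempty
    have key : ∀ q : OmegaStar, Function.update f i q ∈ U i := by
      intro q
      have hg : Function.update f i q ∈ (s₀ : Set Idx).pi u := fun j hj => by
        rw [Function.update_of_ne (by rintro rfl; exact his hj)]
        exact (hu j hj).2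
      have hmem : Function.update f i q ∈ ⋂ j ∈ I, U j := interior_subset (hsub hg)
      exact Set.mem_iInter₂.1 hmem i hiI
    rcases mem_evenOddCover (hU i hiI) with h | h
    · obtain ⟨q, hq⟩ := exists_omegaStar_mem Od Od_infinite
      have := key q
      rw [h] at this
      simp only [Set.mem_preimage, Function.update_self] at this
      exact not_both q ⟨this, hq⟩
    · obtain ⟨q, hq⟩ := exists_omegaStar_mem Ev Ev_infinite
      have := key q
      rw [h] at this
      simp only [Set.mem_preimage, Function.update_self] at this
      exact not_both q ⟨hq, this⟩

end OmegaStarAux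

namespace OmegaStarAux

noncomputable section
open Cardinal Ordinal

attribute [local instance] Classical.propDecidable

/-- Parameter space for cylinder base sets. -/
def P : Type := Σ F : Finset Idx, (↥F → Set ℕ)

/-- The cylinder determined by a parameter. -/
def m (p : P) : Set (Idx → OmegaStar) :=
  (↑p.1 : Set Idx).pi
    (fun i => {q : OmegaStar | (if h : i ∈ p.1 then p.2 ⟨i, h⟩ else Set.univ) ∈ q.1})

def base0 : Set (Set (Idx → OmegaStar)) := {S | ∃ p : P, S = m p}

lemma basis_base0 : IsTopologicalBasis base0 := by
  have := isTopologicalBasis_pi (fun _ : Idx => basis_bS)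
  convert this using 1
  ext S
  constructor
  · rintro ⟨⟨F, v⟩, rfl⟩
    refine ⟨fun i => {q : OmegaStar | (if h : i ∈ F then v ⟨i, h⟩ else Set.univ) ∈ q.1},
      F, fun i hi => ⟨if h : i ∈ F then v ⟨i, h⟩ else Set.univ, rfl⟩, rfl⟩
  · rintro ⟨U, F, hUT, rfl⟩
    have hx : ∀ i (hi : i ∈ F), ∃ x : Set ℕ, U i = {q : OmegaStar | x ∈ q.1} :=
      fun i hi => hUT i hi
    refine ⟨⟨F, fun i => Classical.choose (hx i.1 i.2)⟩, ?_⟩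
    apply Set.pi_congr rfl
    intro i hi
    have hi' : i ∈ F := hi
    rw [dif_pos hi']
    exact Classical.choose_spec (hx i hi')

lemma hIdx_mk : #Idx = Cardinal.continuum.ord.cof := by
  show #(Cardinal.continuum.ord.cof).ord.ToType = _
  rw [Cardinal.mk_toType, Cardinal.card_ord]

lemma hcof_inf : ℵ₀ ≤ Cardinal.continuum.ord.cof :=
  Ordinal.aleph0_le_cof.2 (Cardinal.isSuccLimit_ord aleph0_le_continuum)

instance : Infinite Idx :=
  Cardinal.infinite_iff.2 (by rw [hIdx_mk]; exact hcof_inf)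

lemma mk_P_le : #P ≤ Cardinal.continuum := by
  have h1 : #P = Cardinal.sum (fun F : Finset Idx => #(↥F → Set ℕ)) := mk_sigma _
  have h2 : ∀ F : Finset Idx, #(↥F → Set ℕ) ≤ Cardinal.continuum := by
    intro F
    have : #(↥F → Set ℕ) = (#(Set ℕ)) ^ (#(↥F)) := (Cardinal.power_def _ _).symm
    rw [this, Cardinal.mk_set, Cardinal.mk_nat, Cardinal.two_power_aleph0]
    exact Cardinal.pow_le aleph0_le_continuum (Cardinal.lt_aleph0_of_finite _)
  calc #P ≤ Cardinal.sum (fun _ : Finset Idx => Cardinal.continuum) := by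
            rw [h1]; exact Cardinal.sum_le_sum _ _ h2
    _ = #(Finset Idx) * Cardinal.continuum := Cardinal.sum_const' _ _
    _ ≤ Cardinal.continuum * Cardinal.continuum := by
            apply mul_le_mul_left
            rw [Cardinal.mk_finset_of_infinite, hIdx_mk]
            exact Ordinal.cof_ord_le _
    _ = Cardinal.continuum := Cardinal.mul_eq_self aleph0_le_continuum

lemma exists_small_fibers : ∃ h : P → Idx, ∀ α : Idx, #{p : P // h p = α} < Cardinal.continuum := by
  classical
  have h1 : #P ≤ #(Cardinal.continuum.{0}.ord.ToType) := by
    rw [Cardinal.mk_toType, Cardinal.card_ord]; exact mk_P_le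
  obtain ⟨e⟩ := Cardinal.le_def _ _ |>.1 h1
  haveI i : IsWellOrder Cardinal.continuum.{0}.ord.ToType (· < ·) := isWellOrder_lt
  obtain ⟨S, hSu, hS⟩ := Order.cof_eq (α := Cardinal.continuum.{0}.ord.ToType)
  rw [Ordinal.cof_toType] at hS
  have hequiv : Nonempty (↥S ≃ Idx) := by
    rw [← Cardinal.eq, hS, hIdx_mk]
  obtain ⟨eqv⟩ := hequiv
  choose g hgS hglt using hSu
  refine ⟨fun p => eqv ⟨g (e p), hgS (e p)⟩, fun α => ?_⟩
  set s₀ : Cardinal.continuum.{0}.ord.ToType := (eqv.symm α).1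
  have hinj : Function.Injective
      (fun p : {p : P // eqv ⟨g (e p), hgS (e p)⟩ = α} => (⟨e p.1, by
        have h2 : (⟨g (e p.1), hgS (e p.1)⟩ : ↥S) = eqv.symm α :=
          (Equiv.eq_symm_apply eqv).2 p.2
        have h3 : g (e p.1) = s₀ := congrArg Subtype.val h2
        show e p.1 ∈ Set.Iic s₀
        rw [← h3]
        exact hglt (e p.1)⟩ : ↥(Set.Iic s₀))) := by
    intro p q hpq
    have := congrArg Subtype.val hpq
    exact Subtype.ext (e.injective this)
  refine lt_of_le_of_lt (Cardinal.mk_le_of_injective hinj) ?_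
  rw [← Set.Iio_insert]
  refine lt_of_le_of_lt Cardinal.mk_insert_le ?_
  have hIio : #(↥(Set.Iio s₀)) = (Ordinal.typein (α := Cardinal.continuum.{0}.ord.ToType) (· < ·) s₀).card :=
    Ordinal.card_typein (r := (· < ·)) s₀
  refine Cardinal.add_lt_of_lt aleph0_le_continuum ?_ (one_lt_aleph0.trans_le aleph0_le_continuum)
  rw [hIio]
  exact Cardinal.lt_ord.1 (Ordinal.typein_lt_self s₀)

end

end OmegaStarAux

namespace OmegaStarAux

open Cardinal

lemma preimage_ne (α : Idx) :
    ((fun g : Idx → OmegaStar => g α) ⁻¹' {q : OmegaStar | Ev ∈ q.1}) ≠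
      ((fun g : Idx → OmegaStar => g α) ⁻¹' {q : OmegaStar | Od ∈ q.1}) := by
  intro heq
  obtain ⟨q, hq⟩ := exists_omegaStar_mem Ev Ev_infinite
  have h1 : (fun _ : Idx => q) ∈
      (fun g : Idx → OmegaStar => g α) ⁻¹' {q : OmegaStar | Ev ∈ q.1} := hq
  rw [heq] at h1
  exact not_both q ⟨hq, h1⟩

lemma Nt_le : Nt (Idx → OmegaStar) ≤ Cardinal.continuum := by
  classical
  obtain ⟨h, hfib⟩ := exists_small_fibers
  set B' : Set (Set (Idx → OmegaStar)) :=
    {V | V.Nonempty ∧ ∃ p : P, ∃ U ∈ evenOddCover (h p), V = m p ∩ U} with hB'def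
  -- choice functions
  have hPne : Nonempty P := ⟨⟨(∅ : Finset Idx), fun _ => (∅ : Set ℕ)⟩⟩
  have hw : ∀ V : Set (Idx → OmegaStar),
      ∃ p : P, ∃ U : Set (Idx → OmegaStar), V ∈ B' →
        (U ∈ evenOddCover (h p) ∧ V = m p ∩ U) := by
    intro V
    by_cases hV : V ∈ B'
    · obtain ⟨-, p, U, hU, hVeq⟩ := hV
      exact ⟨p, U, fun _ => ⟨hU, hVeq⟩⟩
    · exact ⟨Classical.arbitrary P, V, fun hc => absurd hc hV⟩
  choose pOf UOf hspec using hw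
  have hUOf : ∀ V ∈ B', UOf V ∈ evenOddCover (h (pOf V)) := fun V hV => (hspec V hV).1
  have hVOf : ∀ V ∈ B', V = m (pOf V) ∩ UOf V := fun V hV => (hspec V hV).2
  have hopen : ∀ V ∈ B', IsOpen V := by
    rintro V ⟨-, p, U, hU, rfl⟩
    exact (basis_base0.isOpen ⟨p, rfl⟩).inter (isOpen_of_mem_evenOddCover hU)
  have hbase : IsBase B' := by
    refine ⟨hopen, ?_⟩
    intro W hW f hf
    obtain ⟨S, ⟨p, rfl⟩, hfS, hSW⟩ := basis_base0.exists_subset_of_mem_open hf hW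
    rcases mem_or (f (h p)) with hE | hO
    · exact ⟨m p ∩ ((fun g => g (h p)) ⁻¹' {q : OmegaStar | Ev ∈ q.1}),
        ⟨⟨f, hfS, hE⟩, p, _, Or.inl rfl, rfl⟩, ⟨hfS, hE⟩,
        Set.inter_subset_left.trans hSW⟩
    · exact ⟨m p ∩ ((fun g => g (h p)) ⁻¹' {q : OmegaStar | Od ∈ q.1}),
        ⟨⟨f, hfS, hO⟩, p, _, Or.inr rfl, rfl⟩, ⟨hfS, hO⟩,
        Set.inter_subset_left.trans hSW⟩
  have hop : IsOpLike B' Cardinal.continuum := by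
    intro V₀ hV₀
    by_contra hge
    rw [not_lt] at hge
    set TS : Set (Set (Idx → OmegaStar)) := {V | V ∈ B' ∧ V₀ ⊆ V} with hTSdef
    have hgeTS : Cardinal.continuum ≤ #↥TS := hge
    -- fibers of the map V ↦ h (pOf V) on TS are small
    have hfibTS : ∀ α : Idx, #↥{V | V ∈ TS ∧ h (pOf V) = α} < Cardinal.continuum := by
      intro α
      have hinj : Function.Injective
          (fun V : ↥{V | V ∈ TS ∧ h (pOf V) = α} =>
            ((⟨pOf V.1, V.2.2⟩ : {p : P // h p = α}),
             (UOf V.1 = (fun g => g α) ⁻¹' {q : OmegaStar | Ev ∈ q.1} : Prop))) := by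
        rintro ⟨V, hVTS, hVα⟩ ⟨W, hWTS, hWα⟩ hVW
        simp only [Prod.mk.injEq, Subtype.mk.injEq] at hVW
        obtain ⟨hp, hProp⟩ := hVW
        apply Subtype.ext
        show V = W
        have hUV := hUOf V hVTS.1
        have hUW := hUOf W hWTS.1
        rw [hVα] at hUV
        rw [hWα] at hUW
        have hpairV := mem_evenOddCover hUV
        have hpairW := mem_evenOddCover hUW
        have hUeq : UOf V = UOf W := by
          rcases hpairV with h1 | h1 <;> rcases hpairW with h2 | h2
          · rw [h1, h2]
          · exfalso
            have h3 : UOf W = (fun g => g α) ⁻¹' {q : OmegaStar | Ev ∈ q.1} := hProp ▸ h1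
            exact preimage_ne α (h3.symm.trans h2)
          · exfalso
            have h3 : UOf V = (fun g => g α) ⁻¹' {q : OmegaStar | Ev ∈ q.1} := hProp.symm ▸ h2
            exact preimage_ne α (h3.symm.trans h1)
          · rw [h1, h2]
        rw [hVOf V hVTS.1, hVOf W hWTS.1, hp, hUeq]
      refine lt_of_le_of_lt (Cardinal.mk_le_of_injective hinj) ?_
      rw [Cardinal.mk_prod, Cardinal.lift_id, Cardinal.lift_id, Cardinal.mk_Prop]
      exact Cardinal.mul_lt_of_lt aleph0_le_continuum (hfib α)
        ((Cardinal.nat_lt_aleph0 2).trans_le aleph0_le_continuum)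
    -- the set of coordinates hit is infinite
    set A : Set Idx := {α | ∃ V ∈ TS, h (pOf V) = α} with hAdef
    have hAinf : A.Infinite := by
      by_contra hfin
      rw [Set.not_infinite] at hfin
      have hcover : TS ⊆ ⋃ α ∈ A, {V | V ∈ TS ∧ h (pOf V) = α} := by
        intro V hV
        exact Set.mem_biUnion ⟨V, hV, rfl⟩ ⟨hV, rfl⟩
      have h1 : #↥TS ≤ #↥(⋃ α ∈ A, {V | V ∈ TS ∧ h (pOf V) = α}) :=
        Cardinal.mk_le_mk_of_subset hcover
      have h2 : #↥(⋃ α ∈ A, {V | V ∈ TS ∧ h (pOf V) = α}) ≤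
          #↥A * ⨆ α : ↥A, #↥{V | V ∈ TS ∧ h (pOf V) = (α : Idx)} :=
        Cardinal.mk_biUnion_le _ _
      have h3 : #↥A * ⨆ α : ↥A, #↥{V | V ∈ TS ∧ h (pOf V) = (α : Idx)} <
          Cardinal.continuum := by
        rcases Set.eq_empty_or_nonempty A with hA0 | hA0
        · simp [hA0]
          exact continuum_pos
        · haveI : Finite ↥A := hfin.to_subtype
          haveI : Nonempty ↥A := hA0.to_subtype
          obtain ⟨α₀, hα₀⟩ := Finite.exists_max
            (fun α : ↥A => #↥{V | V ∈ TS ∧ h (pOf V) = (α : Idx)})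
          refine Cardinal.mul_lt_of_lt aleph0_le_continuum
            ((Cardinal.lt_aleph0_of_finite _).trans_le aleph0_le_continuum) ?_
          exact lt_of_le_of_lt (ciSup_le hα₀) (hfibTS α₀)
      exact absurd (hgeTS.trans (h1.trans h2)) (not_le.2 h3)
    -- choose a countable subfamily of coordinates
    have hVne : V₀.Nonempty := hV₀.1
    have hV₀open : IsOpen V₀ := hopen V₀ hV₀
    set emb : ℕ → Idx := fun n => ((hAinf.natEmbedding A n : ↥A) : Idx) with hembdef
    have hembinj : Function.Injective emb :=
      Subtype.val_injective.comp (hAinf.natEmbedding A).injective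
    set I : Set Idx := Set.range emb with hIdef
    have hIA : I ⊆ A := by rintro α ⟨n, rfl⟩; exact ((hAinf.natEmbedding A) n).2
    have hIcard : #↥I = ℵ₀ := by rw [Cardinal.mk_range_eq _ hembinj, Cardinal.mk_nat]
    set Ufun : Idx → Set (Idx → OmegaStar) := fun α =>
      if hα : α ∈ A then UOf (Classical.choose hα)
      else (fun g => g α) ⁻¹' {q : OmegaStar | Ev ∈ q.1} with hUfundef
    have hUfun : ∀ α ∈ A, Ufun α ∈ evenOddCover α ∧ V₀ ⊆ Ufun α := by
      intro α hα
      obtain ⟨hVTS, hVα⟩ := Classical.choose_spec hα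
      constructor
      · rw [hUfundef]
        simp only [dif_pos hα]
        have := hUOf _ hVTS.1
        rwa [hVα] at this
      · intro x hx
        rw [hUfundef]
        simp only [dif_pos hα]
        have hx' := hVTS.2 hx
        rw [hVOf _ hVTS.1] at hx'
        exact hx'.2
    have hsplit := splitter.2 I Ufun hIcard (fun α hα => (hUfun α (hIA hα)).1)
    have hsub : V₀ ⊆ ⋂ α ∈ I, Ufun α :=
      Set.subset_iInter₂ fun α hα => (hUfun α (hIA hα)).2
    have : V₀ ⊆ interior (⋂ α ∈ I, Ufun α) := interior_maximal hsub hV₀open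
    rw [hsplit] at this
    exact hVne.ne_empty (Set.subset_empty_iff.1 this)
  exact csInf_le' ⟨aleph0_le_continuum, B', hbase, hop⟩

end OmegaStarAux

/-- The sequence `⟨{π_α⁻¹ E*, π_α⁻¹ O*}⟩_{α < cf 𝔠}` is a `⟨cf 𝔠, ω⟩`-splitter of
`(ω*)^{cf 𝔠}`; consequently `Nt((ω*)^{cf 𝔠}) ≤ 𝔠`. -/
theorem omegaStar_pow_cf_continuum_splitter :
    IsSplitter evenOddCover ℵ₀ ∧ Nt (Idx → OmegaStar) ≤ Cardinal.continuum :=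
  ⟨OmegaStarAux.splitter, OmegaStarAux.Nt_le⟩
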